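/- With BM and RM the bijections of Ser(B) defined by summing nested functionals over interval partitions and over all non-crossing partitions respectively, and RB defined by summing over partitions π ∈ NC(n) with π ≪ 1ₙ, one has BM ∘ RB = RM. -/

import Mathlib

/-! Recursive encoding of non-crossing partitions.

An `NCS` encodes a non-crossing partition of `{1,…,n}` (where `n = sz π`):
`empty` is the empty partition of the empty set, and `cons inner tail` is the partition whose
block containing `1` has `inner.length + 1` elements, with the non-crossing partition
`inner[j]` nested in the gap after the `(j+1)`-st element of that block, and with `tail` the
partition of the points lying after the largest element of that block. -/
inductive NCS : Type
  | empty : NCS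
  | cons (inner : List NCS) (tail : NCS) : NCS

namespace NCS

mutual
  /-- The number of points of the underlying set of the encoded partition. -/
  def sz : NCS → ℕ
    | .empty => 0
    | .cons inner tail => szL inner + 1 + sz tail
  /-- `szL inner = inner.length + Σ sz`. -/
  def szL : List NCS → ℕ
    | [] => 0
    | g :: gs => sz g + 1 + szL gs
end

mutual
  /-- The number of blocks of the encoded partition. -/
  def nbl : NCS → ℕ
    | .empty => 0
    | .cons inner tail => 1 + nblL inner + nbl tail
  def nblL : List NCS → ℕ
    | [] => 0
    | g :: gs => nbl g + nblL gs
end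

/-- Interval partitions: all the gaps are empty, recursively. -/
def isIntB : NCS → Bool
  | .empty => true
  | .cons inner tail => inner.all (fun g => match g with | .empty => true | _ => false) && isIntB tail

/-- `π ≪ 1ₙ`: the block containing `1` also contains `n`, i.e. the tail is empty. -/
def isOneB : NCS → Bool
  | .cons _ .empty => true
  | _ => false

end NCS
namespace NCS

mutual
  /-- The list of all encoded non-crossing partitions of `{1,…,n}`. -/
  def allNC : ℕ → List NCS
    | 0 => [NCS.empty]
    | n + 1 =>
        (List.range (n + 1)).attach.flatMap fun j =>
          (allL j.1).flatMap fun inner =>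
            (allNC (n - j.1)).map fun tail => NCS.cons inner tail
  termination_by n => n
  decreasing_by
    · have := j.2; simp [List.mem_range] at this; omega
    · have := j.2; simp [List.mem_range] at this; omega
  /-- All lists `gs` of encoded partitions with `szL gs = m`. -/
  def allL : ℕ → List (List NCS)
    | 0 => [[]]
    | m + 1 =>
        (List.range (m + 1)).attach.flatMap fun s =>
          (allNC s.1).flatMap fun g =>
            (allL (m - s.1)).map fun rest => g :: rest
  termination_by m => m
  decreasing_by
    · have := s.2; simp [List.mem_range] at this; omega
    · have := s.2; simp [List.mem_range] at this; omega
end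

end NCS

/-! Nested functionals and `B`-series. -/

section Series

variable {B : Type*} [Ring B] [Algebra ℂ B]

open NCS

mutual
  /-- Nested evaluation with boundary terms.  For an encoded partition `π` of `n` points and a
  list `cs = [c_0, c_1, …, c_n]`, `wEval F π cs` is the value of the parenthesized expression
  `c_0 W_1 c_1 W_2 c_2 ⋯ W_n c_n`, where the words `W_m` are the nesting words of `π` and
  `F k` is the term of the series with `k` arguments (i.e. the paper's `F^[k+1]`). -/
  def wEval (F : ℕ → List B → B) : NCS → List B → B
    | .empty, cs => cs.headD 1
    | .cons inner tail, cs =>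
        cs.headD 1 * F inner.length (wArgs F inner cs.tail) *
          wEval F tail (cs.tail.drop (NCS.szL inner))
  /-- The list of arguments fed to the term of the outer block: one argument per gap. -/
  def wArgs (F : ℕ → List B → B) : List NCS → List B → List B
    | [], _ => []
    | g :: gs, cs =>
        wEval F g (cs.take (NCS.sz g + 1)) :: wArgs F gs (cs.drop (NCS.sz g + 1))
end

/-- The nested functional `F^[π]` of a series, evaluated on a list of `sz π − 1` arguments. -/
def ncFun (F : ℕ → List B → B) (π : NCS) (bs : List B) : B :=
  wEval F π ((1 : B) :: (bs ++ [1]))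

/-- Two-coloured nested evaluation: the blocks of the outermost chain use the series `Fo`,
all blocks nested inside the gaps use the series `Fi`. -/
def wEvalO (Fo Fi : ℕ → List B → B) : NCS → List B → B
  | .empty, cs => cs.headD 1
  | .cons inner tail, cs =>
      cs.headD 1 * Fo inner.length (wArgs Fi inner cs.tail) *
        wEvalO Fo Fi tail (cs.tail.drop (NCS.szL inner))

/-- The coloured nested functional `(Fo, Fi)^[π, o_π]`: for `π ≪ 1ₙ` the unique outer block
carries a term of `Fo`, all other blocks carry terms of `Fi`. -/
def ncFunO (Fo Fi : ℕ → List B → B) (π : NCS) (bs : List B) : B :=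
  wEvalO Fo Fi π ((1 : B) :: (bs ++ [1]))

end Series

/-- A `B`-series: the term `F n` is a function of `n` arguments (the paper's `F^[n+1]`),
presented on lists of length exactly `n`. -/
def Ser (B : Type*) : Type _ :=
  (n : ℕ) → {l : List B // l.length = n} → B

instance (B : Type*) [One B] : Nonempty (Ser B) :=
  ⟨fun _ _ => 1⟩

/-- Application of a series to an arbitrary list (padded/truncated to the exact arity). -/
def Ser.app {B : Type*} [One B] (F : Ser B) (n : ℕ) (l : List B) : B :=
  F n ⟨List.takeD n l 1, by simp⟩

section Transforms

variable {B : Type*} [Ring B] [Algebra ℂ B]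

open NCS

/-- The series is multilinear: each term is (the restriction of) a `ℂ`-multilinear map. -/
def Ser.IsML (F : Ser B) : Prop :=
  ∀ n : ℕ, ∃ m : MultilinearMap ℂ (fun _ : Fin n => B) B,
    ∀ l : {l : List B // l.length = n}, F n l = m fun i => l.1.getD i.1 1

/-- The map `RM`: `(RM F)^[n] = Σ_{π ∈ NC(n)} F^[π]`. -/
def RMt (F : Ser B) : Ser B := fun n l =>
  ((allNC (n + 1)).map fun π => ncFun (F.app) π l.1).sum

/-- The map `BM`: `(BM F)^[n] = Σ_{π ∈ Int(n)} F^[π]`. -/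
def BMt (F : Ser B) : Ser B := fun n l =>
  (((allNC (n + 1)).filter fun π => isIntB π).map fun π => ncFun (F.app) π l.1).sum

/-- The map `RB`: `(RB F)^[n] = Σ_{π ∈ NC(n), π ≪ 1ₙ} F^[π]`. -/
def RBt (F : Ser B) : Ser B := fun n l =>
  (((allNC (n + 1)).filter fun π => isOneB π).map fun π => ncFun (F.app) π l.1).sum

/-- The map `RB_α`: `(RB_α F)^[n] = Σ_{π ≪ 1ₙ} (F, α∘F)^[π, o_π]`, the unique outer block
carrying a term of `F` and all other blocks carrying terms of `α ∘ F`. -/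
def RBa (α : B →ₗ[ℂ] B) (F : Ser B) : Ser B := fun n l =>
  (((allNC (n + 1)).filter fun π => isOneB π).map fun π =>
    ncFunO (F.app) (fun k bs => α (F.app k bs)) π l.1).sum

/-- Termwise composition `α ∘ F` of a linear map with a series. -/
def cS (α : B →ₗ[ℂ] B) (F : Ser B) : Ser B := fun n l => α (F n l)

/-- We identify `Σ_alg(B)` with `Ser B` via moment series, so an algebraic distribution *is*
its moment series.  The `R`-transform: the unique series with `RM (R_μ) = M_μ`. -/
noncomputable def Rtr (μ : Ser B) : Ser B := Function.invFun (RMt (B := B)) μ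

/-- The `B`-transform: the unique series with `BM (B_μ) = M_μ`. -/
noncomputable def Btr (μ : Ser B) : Ser B := Function.invFun (BMt (B := B)) μ

/-- The transformation `𝔹_α`, defined by `R_{𝔹_α(μ)} = RB_α (R_μ)`. -/
noncomputable def Bop (α : B →ₗ[ℂ] B) (μ : Ser B) : Ser B := RMt (RBa α (Rtr μ))

/-- The Boolean-to-free Bercovici–Pata bijection `𝔹`, defined by `R_{𝔹(μ)} = B_μ`. -/
noncomputable def BPbij (μ : Ser B) : Ser B := RMt (Btr μ)

/-- Free convolution power: `R_{μ^{⊞β}} = β ∘ R_μ`. -/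
noncomputable def freePow (β : B →ₗ[ℂ] B) (μ : Ser B) : Ser B := RMt (cS β (Rtr μ))

/-- Boolean convolution power: `B_{μ^{⊎β}} = β ∘ B_μ`. -/
noncomputable def boolPow (β : B →ₗ[ℂ] B) (μ : Ser B) : Ser B := BMt (cS β (Btr μ))

end Transforms

namespace BMRB
open NCS

section Lists
variable {B : Type*} [Ring B] [Algebra ℂ B]

theorem sum_map_filter {α : Type*} (l : List α) (p : α → Bool) (h : α → B) :
    ((l.filter p).map h).sum = (l.map fun x => if p x then h x else 0).sum := by
  induction l with
  | nil => simp
  | cons a l ih =>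
    by_cases hp : p a <;> simp [List.filter_cons, hp, ih]

theorem sum_flatMap {α β : Type*} (l : List α) (g : α → List β) (h : β → B) :
    ((l.flatMap g).map h).sum = (l.map fun x => ((g x).map h).sum).sum := by
  induction l with
  | nil => rfl
  | cons a l ih => simp [List.flatMap_cons, ih]

theorem attach_flatMap {α β : Type*} (l : List α) (g : α → List β) :
    (l.attach.flatMap fun x => g x.1) = l.flatMap g := by
  conv_rhs => rw [← List.attach_map_subtype_val l]
  rw [List.flatMap_map]

end Lists

/-- Members of `allNC n` have size `n`, members of `allL m` have size `m`. -/
theorem sz_szL : ∀ n : ℕ, (∀ π ∈ allNC n, sz π = n) ∧ (∀ gs ∈ allL n, szL gs = n) := by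
  intro n
  induction n using Nat.strong_induction_on with
  | _ n ih =>
    constructor
    · intro π hπ
      match n with
      | 0 => simp [allNC] at hπ; simp [hπ, sz]
      | n + 1 =>
        rw [allNC] at hπ
        simp only [List.mem_flatMap, List.mem_map, List.mem_attach, true_and] at hπ
        obtain ⟨j, ⟨inner, hinner, tail, htail, rfl⟩⟩ := hπ
        have hj : j.1 < n + 1 := List.mem_range.mp j.2
        have h1 : szL inner = j.1 := (ih j.1 (by omega)).2 inner hinner
        have h2 : sz tail = n - j.1 := (ih (n - j.1) (by omega)).1 tail htail
        simp [sz, h1, h2]; omega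
    · intro gs hgs
      match n with
      | 0 => simp [allL] at hgs; simp [hgs, szL]
      | m + 1 =>
        rw [allL] at hgs
        simp only [List.mem_flatMap, List.mem_map, List.mem_attach, true_and] at hgs
        obtain ⟨s, ⟨g, hg, rest, hrest, rfl⟩⟩ := hgs
        have hs : s.1 < m + 1 := List.mem_range.mp s.2
        have h1 : sz g = s.1 := (ih s.1 (by omega)).1 g hg
        have h2 : szL rest = m - s.1 := (ih (m - s.1) (by omega)).2 rest hrest
        simp [szL, h1, h2]; omega

theorem sz_of_mem {n : ℕ} {π : NCS} (h : π ∈ allNC n) : sz π = n := (sz_szL n).1 π h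
theorem szL_of_mem {m : ℕ} {gs : List NCS} (h : gs ∈ allL m) : szL gs = m := (sz_szL m).2 gs h

theorem eq_zero_of_empty_mem {n : ℕ} (h : NCS.empty ∈ allNC n) : n = 0 := by
  have := sz_of_mem h; simpa [sz] using this.symm

theorem szL_replicate : ∀ j : ℕ, szL (List.replicate j .empty) = j := by
  intro j; induction j with
  | zero => simp [szL]
  | succ j ih => simp [List.replicate_succ, szL, sz, ih]; omega

section Eval
variable {B : Type*} [Ring B] [Algebra ℂ B]

mutual
theorem wEval_take (f : ℕ → List B → B) : ∀ (π : NCS) (cs : List B),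
    wEval f π cs = wEval f π (cs.take (sz π + 1))
  | .empty, cs => by cases cs <;> simp [wEval, sz]
  | .cons inner tail, cs => by
    cases cs with
    | nil => simp
    | cons c cs' =>
      have harith : sz (NCS.cons inner tail) + 1 = (szL inner + (sz tail + 1)) + 1 := by
        simp [sz]; omega
      rw [harith, List.take_succ_cons]
      simp only [wEval, List.headD_cons, List.tail_cons]
      have h1 : wArgs f inner (cs'.take (szL inner + (sz tail + 1))) = wArgs f inner cs' := by
        rw [wArgs_take f inner (cs'.take (szL inner + (sz tail + 1))), List.take_take,
          Nat.min_eq_left (by omega), ← wArgs_take f inner cs']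
      have h2 : (cs'.take (szL inner + (sz tail + 1))).drop (szL inner)
          = (cs'.drop (szL inner)).take (sz tail + 1) := by
        rw [List.drop_take]; congr 1; omega
      rw [h1, h2, ← wEval_take f tail (cs'.drop (szL inner))]

theorem wArgs_take (f : ℕ → List B → B) : ∀ (gs : List NCS) (cs : List B),
    wArgs f gs cs = wArgs f gs (cs.take (szL gs))
  | [], cs => by simp [wArgs]
  | g :: gs, cs => by
    simp only [wArgs, szL]
    have h1 : (cs.take (sz g + 1 + szL gs)).take (sz g + 1) = cs.take (sz g + 1) := by
      rw [List.take_take, Nat.min_eq_left (by omega)]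
    have h2 : (cs.take (sz g + 1 + szL gs)).drop (sz g + 1)
        = (cs.drop (sz g + 1)).take (szL gs) := by
      rw [List.drop_take]; congr 1; omega
    rw [h1, h2, ← wArgs_take f gs (cs.drop (sz g + 1))]
end

theorem wArgs_replicate (f : ℕ → List B → B) :
    ∀ (j : ℕ) (cs : List B), j ≤ cs.length →
      wArgs f (List.replicate j .empty) cs = cs.take j := by
  intro j
  induction j with
  | zero => intro cs _; simp [wArgs]
  | succ j ih =>
    intro cs hlen
    cases cs with
    | nil => simp at hlen
    | cons c cs' =>
      rw [List.replicate_succ]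
      simp only [wArgs, sz, List.take_succ_cons, List.drop_succ_cons, List.take_zero,
        List.drop_zero]
      simp only [wEval, List.headD_cons]
      rw [ih cs' (by simpa using hlen)]

end Eval

end BMRB
namespace BMRB
open NCS

theorem attach_flatMap' {α β : Type*} (l : List α) (g : {x // x ∈ l} → List β)
    (g' : α → List β) (h : ∀ x, g x = g' x.1) : l.attach.flatMap g = l.flatMap g' := by
  rw [funext h]
  conv_rhs => rw [← List.attach_map_subtype_val l]
  rw [List.flatMap_map]

theorem allNC_succ (n : ℕ) : allNC (n + 1) = (List.range (n + 1)).flatMap fun j =>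
    (allL j).flatMap fun inner => (allNC (n - j)).map fun tail => NCS.cons inner tail := by
  rw [allNC]; exact attach_flatMap' _ _ _ fun x => rfl

theorem allL_succ (m : ℕ) : allL (m + 1) = (List.range (m + 1)).flatMap fun s =>
    (allNC s).flatMap fun g => (allL (m - s)).map fun rest => g :: rest := by
  rw [allL]; exact attach_flatMap' _ _ _ fun x => rfl

section Sums
set_option linter.unusedSectionVars false
variable {B : Type*} [Ring B] [Algebra ℂ B]

theorem sum_allL_empty : ∀ (m : ℕ) (h : List NCS → B),
    ((allL m).map fun gs =>
      if gs.all (fun g => match g with | .empty => true | _ => false) then h gs else 0).sum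
      = h (List.replicate m .empty) := by
  intro m
  induction m using Nat.strong_induction_on with
  | _ m ih =>
    intro h
    match m with
    | 0 => simp [allL]
    | m + 1 =>
      rw [allL_succ]
      simp only [sum_flatMap, List.map_map, Function.comp_def]
      rw [List.range_succ_eq_map]
      simp only [List.map_cons, List.map_map, List.sum_cons, Function.comp_def]
      have hz : ((List.range m).map fun s' =>
          ((allNC (s' + 1)).map fun g => ((allL (m - (s' + 1))).map fun rest =>
            if (g :: rest).all (fun g => match g with | .empty => true | _ => false)
            then h (g :: rest) else 0).sum).sum).sum = 0 := by
        apply List.sum_eq_zero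
        intro x hx
        obtain ⟨s', _, rfl⟩ := List.mem_map.mp hx
        apply List.sum_eq_zero
        intro y hy
        obtain ⟨g, hg, rfl⟩ := List.mem_map.mp hy
        apply List.sum_eq_zero
        intro z hz
        obtain ⟨rest, _, rfl⟩ := List.mem_map.mp hz
        have : ¬ (g = NCS.empty) := by
          intro hgE; subst hgE; exact (Nat.succ_ne_zero s') (eq_zero_of_empty_mem hg)
        cases g with
        | empty => exact absurd rfl this
        | cons a b => simp
      rw [hz, add_zero]
      have h0 : allNC 0 = [NCS.empty] := by simp [allNC]
      rw [h0]
      simp only [List.map_cons, List.map_nil, List.sum_cons, List.sum_nil, add_zero,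
        Nat.sub_zero, List.all_cons]
      have := ih m (by omega) (fun rest => h (.empty :: rest))
      simp only [Bool.true_and] at this ⊢
      rw [this, List.replicate_succ]

theorem sum_oneB (f : ℕ → List B → B) (j : ℕ) (bs : List B) :
    (((allNC (j + 1)).filter isOneB).map fun π => ncFun f π bs).sum
      = ((allL j).map fun inner => ncFun f (.cons inner .empty) bs).sum := by
  rw [sum_map_filter, allNC_succ]
  simp only [sum_flatMap, List.map_map, Function.comp_def]
  rw [List.range_succ]
  simp only [List.map_append, List.sum_append, List.map_cons, List.sum_cons, List.map_nil,
    List.sum_nil, add_zero]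
  have hz : ((List.range j).map fun j' =>
      ((allL j').map fun inner => ((allNC (j - j')).map fun tail =>
        if isOneB (.cons inner tail) then ncFun f (.cons inner tail) bs else 0).sum).sum).sum
      = 0 := by
    apply List.sum_eq_zero
    intro x hx
    obtain ⟨j', hj', rfl⟩ := List.mem_map.mp hx
    apply List.sum_eq_zero
    intro y hy
    obtain ⟨inner, _, rfl⟩ := List.mem_map.mp hy
    apply List.sum_eq_zero
    intro z hz
    obtain ⟨tail, htail, rfl⟩ := List.mem_map.mp hz
    have hne : ¬ (tail = NCS.empty) := by
      intro hE; subst hE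
      have := eq_zero_of_empty_mem htail
      have := List.mem_range.mp hj'
      omega
    cases tail with
    | empty => exact absurd rfl hne
    | cons a b => simp [isOneB]
  rw [hz, zero_add, Nat.sub_self]
  have h0 : allNC 0 = [NCS.empty] := by simp [allNC]
  rw [h0]
  simp [isOneB]

theorem ncFun_oneB (f : ℕ → List B → B) (inner : List NCS) (bs : List B)
    (hlen : bs.length = szL inner) :
    ncFun f (.cons inner .empty) bs = f inner.length (wArgs f inner bs) := by
  simp only [ncFun, wEval, List.headD_cons, List.tail_cons]
  have h1 : (bs ++ [(1 : B)]).drop (szL inner) = [1] := by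
    rw [← hlen, List.drop_left]
  have h2 : wArgs f inner (bs ++ [(1 : B)]) = wArgs f inner bs := by
    rw [wArgs_take f inner (bs ++ [1]), wArgs_take f inner bs]
    congr 1
    rw [← hlen, List.take_left, List.take_length]
  rw [h1, h2]
  simp [wEval]

end Sums
end BMRB
namespace BMRB
open NCS

/-- All members of a list of gaps are empty. -/
def allEmp (gs : List NCS) : Bool := isIntB (.cons gs .empty)

theorem isIntB_cons (inner : List NCS) (tail : NCS) :
    isIntB (.cons inner tail) = (allEmp inner && isIntB tail) := by
  simp [allEmp, isIntB]

section Main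
set_option linter.unusedSectionVars false
variable {B : Type*} [Ring B] [Algebra ℂ B]

/-- The series `RB f` as a bare function. -/
def S (f : ℕ → List B → B) : ℕ → List B → B := fun k bs =>
  (((allNC (k + 1)).filter isOneB).map fun π => ncFun f π (List.takeD k bs 1)).sum

theorem sum_allL_empty' : ∀ (m : ℕ) (h : List NCS → B),
    ((allL m).map fun gs => if allEmp gs then h gs else 0).sum
      = h (List.replicate m .empty) := by
  intro m
  induction m using Nat.strong_induction_on with
  | _ m ih =>
    intro h
    match m with
    | 0 => simp [allL, allEmp, isIntB]
    | m + 1 =>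
      rw [allL_succ]
      simp only [sum_flatMap, List.map_map, Function.comp_def]
      rw [List.range_succ_eq_map]
      simp only [List.map_cons, List.map_map, List.sum_cons, Function.comp_def]
      have hz : ((List.range m).map fun s' =>
          ((allNC (s' + 1)).map fun g => ((allL (m - (s' + 1))).map fun rest =>
            if allEmp (g :: rest) then h (g :: rest) else 0).sum).sum).sum
          = 0 := by
        apply List.sum_eq_zero
        intro x hx
        obtain ⟨s', _, rfl⟩ := List.mem_map.mp hx
        apply List.sum_eq_zero
        intro y hy
        obtain ⟨g, hg, rfl⟩ := List.mem_map.mp hy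
        apply List.sum_eq_zero
        intro z hzz
        obtain ⟨rest, _, rfl⟩ := List.mem_map.mp hzz
        have hne : ¬ (g = NCS.empty) := by
          intro hgE; subst hgE; exact (Nat.succ_ne_zero s') (eq_zero_of_empty_mem hg)
        cases g with
        | empty => exact absurd rfl hne
        | cons a b => simp [allEmp, isIntB]
      rw [hz, add_zero]
      have h0 : allNC 0 = [NCS.empty] := by simp [allNC]
      rw [h0]
      simp only [List.map_cons, List.map_nil, List.sum_cons, List.sum_nil, add_zero,
        Nat.sub_zero]
      have hcond : ∀ rest : List NCS,
          allEmp (.empty :: rest) = allEmp rest := by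
        intro rest; simp [allEmp, isIntB]
      simp only [hcond]
      rw [ih m (by omega) (fun rest => h (.empty :: rest)), List.replicate_succ]

theorem main_sum (f : ℕ → List B → B) : ∀ (m : ℕ) (cs : List B), cs.length = m + 1 →
    (((allNC m).filter isIntB).map fun ρ => wEval (S f) ρ cs).sum
      = ((allNC m).map fun π => wEval f π cs).sum := by
  intro m
  induction m using Nat.strong_induction_on with
  | _ m ih =>
    intro cs hlen
    match m with
    | 0 => simp [allNC, isIntB, wEval, List.filter_cons]
    | n + 1 =>
      cases cs with
      | nil => simp at hlen
      | cons c cs' =>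
        have hlen' : cs'.length = n + 1 := by simpa using hlen
        rw [sum_map_filter, allNC_succ]
        simp only [sum_flatMap, List.map_map, Function.comp_def]
        apply congrArg List.sum
        apply List.map_congr_left
        intro j hj
        have hjn : j ≤ n := by have := List.mem_range.mp hj; omega
        have hS : S f j (cs'.take j)
            = ((allL j).map fun inner => f inner.length (wArgs f inner cs')).sum := by
          have hlt : (cs'.take j).length = j := by simp [hlen']; omega
          simp only [S]
          rw [List.takeD_eq_take _ (by omega : j ≤ (cs'.take j).length)]
          rw [List.take_take, Nat.min_self, sum_oneB]
          apply congrArg List.sum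
          apply List.map_congr_left
          intro inner hinner
          have hszL : szL inner = j := szL_of_mem hinner
          rw [ncFun_oneB f inner _ (by rw [hlt, hszL]),
            wArgs_take f inner cs', hszL]
        trans (c * ((allL j).map fun inner => f inner.length (wArgs f inner cs')).sum *
            ((allNC (n - j)).map fun tail => wEval f tail (cs'.drop j)).sum)
        · -- LHS: interval side
          have stepA : ∀ inner ∈ allL j,
              ((allNC (n - j)).map fun tail =>
                if isIntB (.cons inner tail) then wEval (S f) (.cons inner tail) (c :: cs')
                else 0).sum
              = if allEmp inner then
                  ((allNC (n - j)).map fun tail =>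
                    if isIntB tail then wEval (S f) (.cons inner tail) (c :: cs') else 0).sum
                else 0 := by
            intro inner _
            simp only [isIntB_cons]
            cases hb : allEmp inner with
            | false => simp
            | true => simp
          rw [List.map_congr_left stepA, sum_allL_empty' j _]
          have hw : ∀ tail, wEval (S f) (.cons (List.replicate j .empty) tail) (c :: cs')
              = (c * ((allL j).map fun inner => f inner.length (wArgs f inner cs')).sum) *
                  wEval (S f) tail (cs'.drop j) := by
            intro tail
            simp only [wEval, List.headD_cons, List.tail_cons, szL_replicate,
              List.length_replicate]
            rw [wArgs_replicate (S f) j cs' (by omega), hS]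
          have stepB : ∀ tail ∈ allNC (n - j),
              (if isIntB tail then wEval (S f) (.cons (List.replicate j .empty) tail) (c :: cs')
               else 0)
              = (c * ((allL j).map fun inner => f inner.length (wArgs f inner cs')).sum) *
                  (if isIntB tail then wEval (S f) tail (cs'.drop j) else 0) := by
            intro tail _
            cases hb : isIntB tail with
            | false => simp
            | true => simpa using hw tail
          rw [List.map_congr_left stepB, List.sum_map_mul_left, ← sum_map_filter,
            ih (n - j) (by omega) (cs'.drop j) (by simp [hlen']; omega), mul_assoc]
        · -- RHS: non-crossing side
          symm
          have step : ∀ inner ∈ allL j,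
              ((allNC (n - j)).map fun tail => wEval f (.cons inner tail) (c :: cs')).sum
              = c * f inner.length (wArgs f inner cs') *
                  ((allNC (n - j)).map fun tail => wEval f tail (cs'.drop j)).sum := by
            intro inner hinner
            have hszL : szL inner = j := szL_of_mem hinner
            simp only [wEval, List.headD_cons, List.tail_cons, hszL]
            rw [List.sum_map_mul_left]
          rw [List.map_congr_left step, List.sum_map_mul_right, List.sum_map_mul_left]

end Main
end BMRB

/-- `BM ∘ RB = RM` on `B`-series. -/
theorem BM_comp_RB_eq_RM (B : Type*) [Ring B] [Algebra ℂ B] :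
    (BMt (B := B)) ∘ RBt = RMt := by
  funext F
  funext n l
  show BMt (RBt F) n l = RMt F n l
  have happ : (RBt F).app = BMRB.S (F.app) := by
    funext k bs
    rfl
  show (((NCS.allNC (n + 1)).filter NCS.isIntB).map fun π => ncFun ((RBt F).app) π l.1).sum
      = ((NCS.allNC (n + 1)).map fun π => ncFun (F.app) π l.1).sum
  rw [happ]
  simp only [ncFun]
  exact BMRB.main_sum (F.app) (n + 1) _ (by simp [l.2])
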